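/- Let H be a bounded non-negative self-adjoint operator and L a bounded operator on a separable Hilbert space such that L*L ≤ H. Then the Hilbert dimension of the closure of the range of L is at most the Hilbert dimension of the closure of the range of H. -/

import Mathlib

open ContinuousLinearMap

/-- Auxiliary: given a Hilbert basis of `A`, an orthonormal family in a complete space `B`,
and an injection of index sets, there is a linear isometric embedding `A →ₗᵢ B`. -/
lemma aux_embed {A B : Type*} [NormedAddCommGroup A] [InnerProductSpace ℂ A]
    [NormedAddCommGroup B] [InnerProductSpace ℂ B] [CompleteSpace B]
    {ι κ : Type*} (b : HilbertBasis ι ℂ A) {v : κ → B} (hv : Orthonormal ℂ v)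
    (f : ι ↪ κ) : Nonempty (A →ₗᵢ[ℂ] B) :=
  ⟨((hv.comp f f.injective).orthogonalFamily.linearIsometry).comp b.repr.toLinearIsometry⟩

/-- Auxiliary: an orthonormal set in a separable inner product space is countable. -/
lemma aux_countable {E : Type*} [NormedAddCommGroup E] [InnerProductSpace ℂ E]
    [TopologicalSpace.SeparableSpace E] {w : Set E}
    (hw : Orthonormal ℂ (Subtype.val : w → E)) : w.Countable := by
  have hdist : ∀ x ∈ w, ∀ y ∈ w, x ≠ y → (1 : ℝ) ≤ dist x y := by
    intro x hx y hy hxy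
    have h1 : ‖((⟨x, hx⟩ : w) : E)‖ = 1 := hw.1 ⟨x, hx⟩
    have h2 : ‖((⟨y, hy⟩ : w) : E)‖ = 1 := hw.1 ⟨y, hy⟩
    have h3 : (inner ℂ ((⟨x, hx⟩ : w) : E) ((⟨y, hy⟩ : w) : E) : ℂ) = 0 :=
      hw.2 (by simpa using hxy)
    have h4 : ‖x - y‖ ^ 2 = ‖x‖ ^ 2 - 2 * Complex.re (inner ℂ x y) + ‖y‖ ^ 2 :=
      @norm_sub_sq ℂ _ _ _ _ x y
    rw [h1, h2, h3] at h4
    have h5 : ‖x - y‖ ^ 2 = 2 := by rw [h4]; simp; ring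
    rw [dist_eq_norm]
    nlinarith [norm_nonneg (x - y)]
  have hpd : w.PairwiseDisjoint (fun x => Metric.ball x (1 / 2)) := by
    intro x hx y hy hxy
    apply Metric.ball_disjoint_ball
    have := hdist x hx y hy hxy
    linarith
  exact hpd.countable_of_isOpen (fun x _ => Metric.isOpen_ball)
    (fun x _ => Metric.nonempty_ball.2 (by norm_num))

/-- If `H` is a bounded non-negative self-adjoint operator and `L` a bounded
operator on a separable complex Hilbert space with `L*L ≤ H` (i.e. `H - L*L` is a positive
operator), then the Hilbert dimension of the closure of the range of `L` is at most that of the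
closure of the range of `H`; equivalently, there is a linear isometric embedding of the first
closed subspace into the second. -/
theorem stmt1 {𝓗 : Type*} [NormedAddCommGroup 𝓗] [InnerProductSpace ℂ 𝓗]
    [CompleteSpace 𝓗] [TopologicalSpace.SeparableSpace 𝓗]
    (H L : 𝓗 →L[ℂ] 𝓗) (hH : H.IsPositive)
    (hLH : (H - (ContinuousLinearMap.adjoint L) ∘L L).IsPositive) :
    Nonempty ((Submodule.topologicalClosure (LinearMap.range (L : 𝓗 →ₗ[ℂ] 𝓗))) →ₗᵢ[ℂ]
      (Submodule.topologicalClosure (LinearMap.range (H : 𝓗 →ₗ[ℂ] 𝓗)))) := by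
  haveI : SecondCountableTopology 𝓗 := UniformSpace.secondCountable_of_separable 𝓗
  set A := Submodule.topologicalClosure (LinearMap.range (L : 𝓗 →ₗ[ℂ] 𝓗)) with hA
  set B := Submodule.topologicalClosure (LinearMap.range (H : 𝓗 →ₗ[ℂ] 𝓗)) with hB
  haveI : CompleteSpace A :=
    (LinearMap.range (L : 𝓗 →ₗ[ℂ] 𝓗)).isClosed_topologicalClosure.completeSpace_coe
  haveI : CompleteSpace B :=
    (LinearMap.range (H : 𝓗 →ₗ[ℂ] 𝓗)).isClosed_topologicalClosure.completeSpace_coe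
  -- key: `H x = 0 → L x = 0`
  have key : ∀ x : 𝓗, H x = 0 → L x = 0 := by
    intro x hx
    have h1 := hLH.2 x
    rw [reApplyInnerSelf_apply] at h1
    have h2 : (H - (ContinuousLinearMap.adjoint L) ∘L L) x
        = H x - (ContinuousLinearMap.adjoint L) (L x) := rfl
    rw [h2, hx, zero_sub, inner_neg_left, adjoint_inner_left] at h1
    have h1' : RCLike.re (inner ℂ (L x) (L x) : ℂ) ≤ 0 := by simpa using h1
    rw [inner_self_eq_norm_sq (𝕜 := ℂ)] at h1'
    have h3 : ‖L x‖ = 0 := by nlinarith [norm_nonneg (L x)]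
    exact norm_eq_zero.mp h3
  -- `H z = 0` on `Bᗮ`
  have keyH : ∀ z : 𝓗, z ∈ Bᗮ → H z = 0 := by
    intro z hz
    have hz' : z ∈ (LinearMap.range (H : 𝓗 →ₗ[ℂ] 𝓗))ᗮ :=
      Submodule.orthogonal_le (Submodule.le_topologicalClosure _) hz
    have h0 : (inner ℂ (H (H z)) z : ℂ) = 0 := hz' _ ⟨H z, rfl⟩
    have hsa : ContinuousLinearMap.adjoint H = H := isSelfAdjoint_iff'.mp hH.isSelfAdjoint
    have h1 : (inner ℂ (H z) (H z) : ℂ) = 0 := by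
      have e := adjoint_inner_left H z (H z)
      rw [hsa] at e
      rw [← e]
      exact h0
    exact inner_self_eq_zero.mp h1
  by_cases hfd : FiniteDimensional ℂ B
  · -- finite-dimensional case
    have hrange : LinearMap.range (L : 𝓗 →ₗ[ℂ] 𝓗) ≤ Submodule.map (L : 𝓗 →ₗ[ℂ] 𝓗) B := by
      rintro _ ⟨x, rfl⟩
      obtain ⟨y, hy, z, hz, rfl⟩ := B.exists_add_mem_mem_orthogonal x
      have hLz : L z = 0 := key z (keyH z hz)
      refine ⟨y, hy, ?_⟩
      simp [hLz]
    set M := Submodule.map (L : 𝓗 →ₗ[ℂ] 𝓗) B with hM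
    haveI : FiniteDimensional ℂ M := Module.Finite.map B (L : 𝓗 →ₗ[ℂ] 𝓗)
    have hAM : A ≤ M := by
      rw [hA]
      exact (LinearMap.range (L : 𝓗 →ₗ[ℂ] 𝓗)).topologicalClosure_minimal hrange M.closed_of_finiteDimensional
    haveI : FiniteDimensional ℂ A := Submodule.finiteDimensional_of_le hAM
    have hrank : Module.finrank ℂ A ≤ Module.finrank ℂ B :=
      le_trans (Submodule.finrank_mono hAM) (Submodule.finrank_map_le _ _)
    exact aux_embed (stdOrthonormalBasis ℂ A).toHilbertBasis
      (stdOrthonormalBasis ℂ B).orthonormal (Fin.castLEEmb hrank)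
  · -- infinite-dimensional case
    obtain ⟨w, bA, hw⟩ := exists_hilbertBasis ℂ A
    obtain ⟨w', bB, hw'⟩ := exists_hilbertBasis ℂ B
    have hwc : w.Countable := aux_countable (hw ▸ bA.orthonormal)
    haveI : Countable w := hwc.to_subtype
    haveI : Infinite w' := by
      rw [← not_finite_iff_infinite]
      intro hfin
      haveI := Fintype.ofFinite w'
      exact hfd (Module.Finite.of_basis bB.toOrthonormalBasis.toBasis)
    have hcard : Cardinal.mk w ≤ Cardinal.mk w' :=
      le_trans Cardinal.mk_le_aleph0 (Cardinal.aleph0_le_mk w')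
    obtain ⟨f⟩ := (Cardinal.le_def w w').mp hcard
    exact aux_embed bA (hw' ▸ bB.orthonormal) f
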